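/- Define Ψ(μ) := −2v₁² + 6v₁ − 5 + 1/v₁ and Ξ(μ) := −4v₁² + 20v₁ − 17 + 2/v₁ − 1/v₁² − 12·ln(v₁), where v₁ = 2/(2+μ). Then on [0,2] the function μ ↦ Ψ(μ) is continuous and strictly decreasing with Ψ(0) = 0 and Ψ(2) = −1/2, and the function μ ↦ Ξ(μ) is continuous and strictly increasing with Ξ(0) = 0 and Ξ(2) = 12·ln(2) − 8. -/

import Mathlib

open MeasureTheory Set

noncomputable section

def IsCopula (C : ℝ → ℝ → ℝ) : Prop :=
  (∀ u ∈ Icc (0:ℝ) 1, ∀ v ∈ Icc (0:ℝ) 1, C u v ∈ Icc (0:ℝ) 1) ∧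
  (∀ u ∈ Icc (0:ℝ) 1, C u 0 = 0 ∧ C u 1 = u) ∧
  (∀ v ∈ Icc (0:ℝ) 1, C 0 v = 0 ∧ C 1 v = v) ∧
  (∀ u₁ ∈ Icc (0:ℝ) 1, ∀ u₂ ∈ Icc (0:ℝ) 1, ∀ v₁ ∈ Icc (0:ℝ) 1, ∀ v₂ ∈ Icc (0:ℝ) 1,
    u₁ ≤ u₂ → v₁ ≤ v₂ → 0 ≤ C u₂ v₂ - C u₁ v₂ - C u₂ v₁ + C u₁ v₁)

/-- The (a.e. defined) partial derivative of `C` with respect to its first argument. -/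
def d1 (C : ℝ → ℝ → ℝ) (t v : ℝ) : ℝ := deriv (fun s => C s v) t

/-- Chatterjee's rank correlation. -/
def xi (C : ℝ → ℝ → ℝ) : ℝ :=
  6 * (∫ v in (0:ℝ)..1, ∫ t in (0:ℝ)..1, (d1 C t v) ^ 2) - 2

/-- Spearman's footrule. -/
def psi (C : ℝ → ℝ → ℝ) : ℝ :=
  6 * (∫ v in (0:ℝ)..1, C v v) - 2

/-- Stochastically increasing: for each `v`, `t ↦ ∂₁C(t,v)` agrees a.e. on `[0,1]`
with a non-increasing function. -/
def IsSI (C : ℝ → ℝ → ℝ) : Prop :=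
  ∀ v ∈ Icc (0:ℝ) 1, ∃ g : ℝ → ℝ, AntitoneOn g (Icc (0:ℝ) 1) ∧
    (∀ᵐ t ∂(volume.restrict (Icc (0:ℝ) 1)), d1 C t v = g t)

/-- Closed form of the `ψ`-functional of `C↘_μ`, with `v₁ = 2/(2+μ)`. -/
def PsiMu (μ : ℝ) : ℝ :=
  -2 * (2 / (2 + μ)) ^ 2 + 6 * (2 / (2 + μ)) - 5 + 1 / (2 / (2 + μ))

/-- Closed form of the `ξ`-functional of `C↘_μ`, with `v₁ = 2/(2+μ)`. -/
def XiMu (μ : ℝ) : ℝ :=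
  -4 * (2 / (2 + μ)) ^ 2 + 20 * (2 / (2 + μ)) - 17 + 2 / (2 / (2 + μ))
    - 1 / (2 / (2 + μ)) ^ 2 - 12 * Real.log (2 / (2 + μ))

/-- Rational reformulation of `PsiMu`. -/
def PAux (μ : ℝ) : ℝ := -8 / (2 + μ) ^ 2 + 12 / (2 + μ) - 5 + (2 + μ) / 2

/-- Reformulation of `XiMu`. -/
def QAux (μ : ℝ) : ℝ :=
  -16 / (2 + μ) ^ 2 + 40 / (2 + μ) - 17 + (2 + μ) - (2 + μ) ^ 2 / 4
    - 12 * Real.log 2 + 12 * Real.log (2 + μ)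

lemma PsiMu_eq_PAux : PsiMu = PAux := by
  funext x
  by_cases h : (2:ℝ) + x = 0
  · simp [PsiMu, PAux, h]
  · unfold PsiMu PAux
    field_simp
    ring

lemma XiMu_eq_QAux {x : ℝ} (h : (2:ℝ) + x ≠ 0) : XiMu x = QAux x := by
  unfold XiMu QAux
  rw [Real.log_div two_ne_zero h]
  field_simp
  ring

lemma hasDerivAt_PAux {x : ℝ} (h : (2:ℝ) + x ≠ 0) :
    HasDerivAt PAux (16 / (2 + x) ^ 3 - 12 / (2 + x) ^ 2 + 1 / 2) x := by
  have hs : HasDerivAt (fun μ : ℝ => 2 + μ) 1 x := (hasDerivAt_id x).const_add 2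
  have h2 : HasDerivAt (fun μ : ℝ => (2 + μ) ^ 2) (2 * (2 + x)) x := by
    have := hs.fun_pow 2
    simpa using this
  have h2ne : ((2:ℝ) + x) ^ 2 ≠ 0 := pow_ne_zero _ h
  have hd1 : HasDerivAt (fun μ : ℝ => -8 / (2 + μ) ^ 2) (16 / (2 + x) ^ 3) x := by
    have := (hasDerivAt_const x (-8:ℝ)).fun_div h2 h2ne
    convert! this using 1
    field_simp
    ring
  have hd2 : HasDerivAt (fun μ : ℝ => 12 / (2 + μ)) (-12 / (2 + x) ^ 2) x := by
    have := (hasDerivAt_const x (12:ℝ)).fun_div hs h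
    convert! this using 1
    field_simp
    ring
  have hd3 : HasDerivAt (fun μ : ℝ => (2 + μ) / 2) (1 / 2 : ℝ) x := by
    simpa using hs.div_const 2
  have := ((hd1.add hd2).sub_const 5).add hd3
  convert! this using 1
  ring

lemma hasDerivAt_QAux {x : ℝ} (h : (0:ℝ) < 2 + x) :
    HasDerivAt QAux
      (32 / (2 + x) ^ 3 - 40 / (2 + x) ^ 2 + 1 - (2 + x) / 2 + 12 / (2 + x)) x := by
  have hne : (2:ℝ) + x ≠ 0 := ne_of_gt h
  have hs : HasDerivAt (fun μ : ℝ => 2 + μ) 1 x := (hasDerivAt_id x).const_add 2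
  have h2 : HasDerivAt (fun μ : ℝ => (2 + μ) ^ 2) (2 * (2 + x)) x := by
    have := hs.fun_pow 2
    simpa using this
  have h2ne : ((2:ℝ) + x) ^ 2 ≠ 0 := pow_ne_zero _ hne
  have hd1 : HasDerivAt (fun μ : ℝ => -16 / (2 + μ) ^ 2) (32 / (2 + x) ^ 3) x := by
    have := (hasDerivAt_const x (-16:ℝ)).fun_div h2 h2ne
    convert! this using 1
    field_simp
    ring
  have hd2 : HasDerivAt (fun μ : ℝ => 40 / (2 + μ)) (-40 / (2 + x) ^ 2) x := by
    have := (hasDerivAt_const x (40:ℝ)).fun_div hs hne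
    convert! this using 1
    field_simp
    ring
  have hd3 : HasDerivAt (fun μ : ℝ => (2 + μ) ^ 2 / 4) ((2 + x) / 2) x := by
    have := h2.div_const 4
    convert! this using 1
    ring
  have hd4 : HasDerivAt (fun μ : ℝ => 12 * Real.log (2 + μ)) (12 / (2 + x)) x := by
    have := (hs.log hne).const_mul 12
    convert! this using 1
    field_simp
  have := ((((((hd1.add hd2).sub_const 17).add hs).sub hd3).sub_const
      (12 * Real.log 2)).add hd4)
  convert! this using 1
  ring

lemma continuousOn_PAux : ContinuousOn PAux (Icc (0:ℝ) 2) := by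
  have hne : ∀ x ∈ Icc (0:ℝ) 2, (2:ℝ) + x ≠ 0 := by
    intro x hx
    have := hx.1
    intro hc; linarith
  have hc : ContinuousOn (fun μ : ℝ => 2 + μ) (Icc (0:ℝ) 2) :=
    (continuous_const.add continuous_id).continuousOn
  exact (((continuousOn_const.div (hc.pow 2)
      (fun x hx => pow_ne_zero _ (hne x hx))).add
      (continuousOn_const.div hc hne)).sub continuousOn_const).add
      (hc.div_const 2)

lemma continuousOn_QAux : ContinuousOn QAux (Icc (0:ℝ) 2) := by
  have hne : ∀ x ∈ Icc (0:ℝ) 2, (2:ℝ) + x ≠ 0 := by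
    intro x hx
    have := hx.1
    intro hc; linarith
  have hc : ContinuousOn (fun μ : ℝ => 2 + μ) (Icc (0:ℝ) 2) :=
    (continuous_const.add continuous_id).continuousOn
  exact ((((((continuousOn_const.div (hc.pow 2)
      (fun x hx => pow_ne_zero _ (hne x hx))).add
      (continuousOn_const.div hc hne)).sub continuousOn_const).add hc).sub
      ((hc.pow 2).div_const 4)).sub continuousOn_const).add
      (continuousOn_const.mul (hc.log hne))

/-- On `[0,2]`, `Ψ` is continuous and strictly decreasing from `0` to `-1/2`,
and `Ξ` is continuous and strictly increasing from `0` to `12·ln 2 − 8`. -/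
theorem PsiMu_XiMu_monotone :
    ContinuousOn PsiMu (Icc (0:ℝ) 2) ∧ StrictAntiOn PsiMu (Icc (0:ℝ) 2) ∧
    PsiMu 0 = 0 ∧ PsiMu 2 = -(1 / 2) ∧
    ContinuousOn XiMu (Icc (0:ℝ) 2) ∧ StrictMonoOn XiMu (Icc (0:ℝ) 2) ∧
    XiMu 0 = 0 ∧ XiMu 2 = 12 * Real.log 2 - 8 := by
  have hEq : EqOn XiMu QAux (Icc (0:ℝ) 2) := by
    intro x hx
    exact XiMu_eq_QAux (by have := hx.1; intro hc; linarith)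
  refine ⟨?_, ?_, ?_, ?_, ?_, ?_, ?_, ?_⟩
  · rw [PsiMu_eq_PAux]; exact continuousOn_PAux
  · rw [PsiMu_eq_PAux]
    apply strictAntiOn_of_deriv_neg (convex_Icc 0 2) continuousOn_PAux
    intro x hx
    rw [interior_Icc] at hx
    have hx0 : (0:ℝ) < x := hx.1
    have hx2 : x < 2 := hx.2
    have h : (0:ℝ) < 2 + x := by linarith
    have hne : (2:ℝ) + x ≠ 0 := ne_of_gt h
    rw [(hasDerivAt_PAux hne).deriv]
    set s := 2 + x with hs
    have hs2 : (2:ℝ) < s := by simp [hs]; linarith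
    have hs4 : s < 4 := by simp [hs]; linarith
    have hs3 : (0:ℝ) < s ^ 3 := by positivity
    have key : (16 / s ^ 3 - 12 / s ^ 2 + 1 / 2) * (2 * s ^ 3)
        = s ^ 3 - 24 * s + 32 := by
      field_simp
      ring
    have hrhs : s ^ 3 - 24 * s + 32 < 0 := by nlinarith
    by_contra hcon
    push_neg at hcon
    have h0 : (0:ℝ) ≤ (16 / s ^ 3 - 12 / s ^ 2 + 1 / 2) * (2 * s ^ 3) :=
      mul_nonneg hcon (by positivity)
    rw [key] at h0
    linarith
  · norm_num [PsiMu]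
  · norm_num [PsiMu]
  · exact continuousOn_QAux.congr hEq
  · apply StrictMonoOn.congr _ hEq.symm
    apply strictMonoOn_of_deriv_pos (convex_Icc 0 2) continuousOn_QAux
    intro x hx
    rw [interior_Icc] at hx
    have hx0 : (0:ℝ) < x := hx.1
    have hx2 : x < 2 := hx.2
    have h : (0:ℝ) < 2 + x := by linarith
    rw [(hasDerivAt_QAux h).deriv]
    set s := 2 + x with hs
    have hs2 : (2:ℝ) < s := by simp [hs]; linarith
    have hs4 : s < 4 := by simp [hs]; linarith
    have hs3 : (0:ℝ) < s ^ 3 := by positivity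
    have key : (32 / s ^ 3 - 40 / s ^ 2 + 1 - s / 2 + 12 / s) * (2 * s ^ 3)
        = -s ^ 4 + 2 * s ^ 3 + 24 * s ^ 2 - 80 * s + 32 + 32 := by
      field_simp
      ring
    have hrhs : (0:ℝ) < -s ^ 4 + 2 * s ^ 3 + 24 * s ^ 2 - 80 * s + 64 := by
      nlinarith [mul_pos (mul_pos (show (0:ℝ) < s - 2 by linarith)
        (show (0:ℝ) < 4 - s by linarith)) (show (0:ℝ) < s ^ 2 + 4 * s - 8 by nlinarith)]
    by_contra hcon
    push_neg at hcon
    have h0 : (32 / s ^ 3 - 40 / s ^ 2 + 1 - s / 2 + 12 / s) * (2 * s ^ 3) ≤ 0 :=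
      mul_nonpos_of_nonpos_of_nonneg hcon (by positivity)
    rw [key] at h0
    linarith
  · norm_num [XiMu]
  · have h2 : XiMu 2 = QAux 2 := XiMu_eq_QAux (by norm_num)
    rw [h2]
    unfold QAux
    norm_num
    rw [show (4:ℝ) = 2 ^ 2 by norm_num, Real.log_pow]
    push_cast
    ring
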